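/- For n ≥ 1, let G_n be the graph with vertex set {u, v, m_1, …, m_n} and edge set {u m_i, m_i v : i = 1,…,n}. The number of forests (acyclic edge subsets) of G_n in which u and v lie in different connected components is 3^n, the number of forests in which u and v are connected is n·3^{n−1}, and hence under the uniform distribution on forests of G_n, the probability that u and v are in different components equals 3/(n+3), which tends to 0 as n → ∞. Consequently, the uniform (maximum-entropy) distribution on the independent sets of the graphic matroid of G_n places vanishing probability on the event that an additional edge {u,v} would be addable. -/

import Mathlib

open Finset

namespace Stmt19

/-- Vertices of `G_n`: the terminal `u`, the terminal `v`, and the middle vertices `m i`. -/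
abbrev Vtx (n : ℕ) := Unit ⊕ Unit ⊕ Fin n

def u (n : ℕ) : Vtx n := Sum.inl ()
def v (n : ℕ) : Vtx n := Sum.inr (Sum.inl ())
def m (n : ℕ) (i : Fin n) : Vtx n := Sum.inr (Sum.inr i)

/-- The edges of `G_n`: `u m_i` and `m_i v` for `i = 1, …, n`. -/
def edges (n : ℕ) : Finset (Sym2 (Vtx n)) :=
  (Finset.univ.image fun i : Fin n => s(u n, m n i)) ∪
    (Finset.univ.image fun i : Fin n => s(m n i, v n))

open Classical in
/-- The number of forests (acyclic edge subsets) of `G_n`. -/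
noncomputable def forestCount (n : ℕ) : ℕ :=
  ((edges n).powerset.filter
    (fun F => (SimpleGraph.fromEdgeSet (↑F : Set (Sym2 (Vtx n)))).IsAcyclic)).card

open Classical in
/-- The number of forests of `G_n` in which `u` and `v` lie in different components. -/
noncomputable def disconnCount (n : ℕ) : ℕ :=
  ((edges n).powerset.filter
    (fun F => (SimpleGraph.fromEdgeSet (↑F : Set (Sym2 (Vtx n)))).IsAcyclic ∧
      ¬ (SimpleGraph.fromEdgeSet (↑F : Set (Sym2 (Vtx n)))).Reachable (u n) (v n))).card

open Classical in
/-- The number of forests of `G_n` in which `u` and `v` are connected. -/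
noncomputable def connCount (n : ℕ) : ℕ :=
  ((edges n).powerset.filter
    (fun F => (SimpleGraph.fromEdgeSet (↑F : Set (Sym2 (Vtx n)))).IsAcyclic ∧
      (SimpleGraph.fromEdgeSet (↑F : Set (Sym2 (Vtx n)))).Reachable (u n) (v n))).card

variable {n : ℕ}

@[simp] lemma u_ne_v : u n ≠ v n := by simp [u, v]
@[simp] lemma v_ne_u : v n ≠ u n := by simp [u, v]
@[simp] lemma u_ne_m (i : Fin n) : u n ≠ m n i := by simp [u, m]
@[simp] lemma m_ne_u (i : Fin n) : m n i ≠ u n := by simp [u, m]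
@[simp] lemma v_ne_m (i : Fin n) : v n ≠ m n i := by simp [v, m]
@[simp] lemma m_ne_v (i : Fin n) : m n i ≠ v n := by simp [v, m]
@[simp] lemma m_eq_m {i j : Fin n} : m n i = m n j ↔ i = j := by simp [m]

lemma mem_edges {e : Sym2 (Vtx n)} :
    e ∈ edges n ↔ (∃ i, s(u n, m n i) = e) ∨ (∃ i, s(m n i, v n) = e) := by
  simp [edges]

def Aset (n : ℕ) (F : Finset (Sym2 (Vtx n))) : Finset (Fin n) :=
  univ.filter fun i => s(u n, m n i) ∈ F

def Bset (n : ℕ) (F : Finset (Sym2 (Vtx n))) : Finset (Fin n) :=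
  univ.filter fun i => s(m n i, v n) ∈ F

@[simp] lemma mem_Aset {F : Finset (Sym2 (Vtx n))} {i : Fin n} :
    i ∈ Aset n F ↔ s(u n, m n i) ∈ F := by simp [Aset]

@[simp] lemma mem_Bset {F : Finset (Sym2 (Vtx n))} {i : Fin n} :
    i ∈ Bset n F ↔ s(m n i, v n) ∈ F := by simp [Bset]

def Gr (n : ℕ) (F : Finset (Sym2 (Vtx n))) : SimpleGraph (Vtx n) :=
  SimpleGraph.fromEdgeSet (↑F : Set (Sym2 (Vtx n)))

lemma adj_cases {F : Finset (Sym2 (Vtx n))} (hF : F ⊆ edges n) {x y : Vtx n}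
    (h : (Gr n F).Adj x y) :
    (∃ i, i ∈ Aset n F ∧ ((x = u n ∧ y = m n i) ∨ (x = m n i ∧ y = u n))) ∨
    (∃ i, i ∈ Bset n F ∧ ((x = m n i ∧ y = v n) ∨ (x = v n ∧ y = m n i))) := by
  rw [Gr, SimpleGraph.fromEdgeSet_adj] at h
  obtain ⟨hmem, hne⟩ := h
  rw [Finset.mem_coe] at hmem
  rcases mem_edges.mp (hF hmem) with ⟨i, hi⟩ | ⟨i, hi⟩
  · have hin : s(u n, m n i) ∈ F := hi ▸ hmem
    rw [Sym2.eq_iff] at hi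
    rcases hi with ⟨h1, h2⟩ | ⟨h1, h2⟩
    · exact Or.inl ⟨i, by simp [hin], Or.inl ⟨h1.symm, h2.symm⟩⟩
    · exact Or.inl ⟨i, by simp [hin], Or.inr ⟨h2.symm, h1.symm⟩⟩
  · have hin : s(m n i, v n) ∈ F := hi ▸ hmem
    rw [Sym2.eq_iff] at hi
    rcases hi with ⟨h1, h2⟩ | ⟨h1, h2⟩
    · exact Or.inr ⟨i, by simp [hin], Or.inl ⟨h1.symm, h2.symm⟩⟩
    · exact Or.inr ⟨i, by simp [hin], Or.inr ⟨h2.symm, h1.symm⟩⟩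

lemma reach_closed {α : Type*} {G : SimpleGraph α} {S : Set α}
    (hS : ∀ x ∈ S, ∀ y, G.Adj x y → y ∈ S) {x y : α} (hx : x ∈ S)
    (h : G.Reachable x y) : y ∈ S := by
  rw [SimpleGraph.reachable_iff_reflTransGen] at h
  induction h with
  | refl => exact hx
  | tail _ hadj ih => exact hS _ ih _ hadj

lemma reach_from_u {F : Finset (Sym2 (Vtx n))} (hF : F ⊆ edges n) {x : Vtx n}
    (h : (Gr n F).Reachable (u n) x) :
    x = u n ∨ (∃ i ∈ Aset n F, x = m n i) ∨
      ((Aset n F ∩ Bset n F).Nonempty ∧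
        (x = v n ∨ ∃ i ∈ Bset n F, x = m n i)) := by
  classical
  set S : Set (Vtx n) := {x | x = u n ∨ (∃ i ∈ Aset n F, x = m n i) ∨
      ((Aset n F ∩ Bset n F).Nonempty ∧
        (x = v n ∨ ∃ i ∈ Bset n F, x = m n i))} with hSdef
  have hclosed : ∀ x ∈ S, ∀ y, (Gr n F).Adj x y → y ∈ S := by
    intro x hx y hadj
    rcases adj_cases hF hadj with ⟨i, hiA, ⟨hx', hy'⟩ | ⟨hx', hy'⟩⟩ |
      ⟨i, hiB, ⟨hx', hy'⟩ | ⟨hx', hy'⟩⟩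
    · subst hy'; exact Or.inr (Or.inl ⟨i, hiA, rfl⟩)
    · subst hy'; exact Or.inl rfl
    · subst hx'; subst hy'
      rcases hx with h | ⟨j, hjA, hj⟩ | ⟨hC, _⟩
      · exact absurd h (m_ne_u i)
      · have hiA : i ∈ Aset n F := by rw [m_eq_m.mp hj]; exact hjA
        exact Or.inr (Or.inr ⟨⟨i, mem_inter.mpr ⟨hiA, hiB⟩⟩, Or.inl rfl⟩)
      · exact Or.inr (Or.inr ⟨hC, Or.inl rfl⟩)
    · subst hx'; subst hy'
      rcases hx with h | ⟨j, _, hj⟩ | ⟨hC, _⟩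
      · exact absurd h v_ne_u
      · exact absurd hj (v_ne_m j)
      · exact Or.inr (Or.inr ⟨hC, Or.inr ⟨i, hiB, rfl⟩⟩)
  exact reach_closed hclosed (Or.inl rfl) h

lemma reach_from_v {F : Finset (Sym2 (Vtx n))} (hF : F ⊆ edges n) {x : Vtx n}
    (h : (Gr n F).Reachable (v n) x) :
    x = v n ∨ (∃ i ∈ Bset n F, x = m n i) ∨
      ((Aset n F ∩ Bset n F).Nonempty ∧
        (x = u n ∨ ∃ i ∈ Aset n F, x = m n i)) := by
  classical
  set S : Set (Vtx n) := {x | x = v n ∨ (∃ i ∈ Bset n F, x = m n i) ∨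
      ((Aset n F ∩ Bset n F).Nonempty ∧
        (x = u n ∨ ∃ i ∈ Aset n F, x = m n i))} with hSdef
  have hclosed : ∀ x ∈ S, ∀ y, (Gr n F).Adj x y → y ∈ S := by
    intro x hx y hadj
    rcases adj_cases hF hadj with ⟨i, hiA, ⟨hx', hy'⟩ | ⟨hx', hy'⟩⟩ |
      ⟨i, hiB, ⟨hx', hy'⟩ | ⟨hx', hy'⟩⟩
    · subst hx'; subst hy'
      rcases hx with h | ⟨j, _, hj⟩ | ⟨hC, _⟩
      · exact absurd h u_ne_v
      · exact absurd hj (u_ne_m j)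
      · exact Or.inr (Or.inr ⟨hC, Or.inr ⟨i, hiA, rfl⟩⟩)
    · subst hx'; subst hy'
      rcases hx with h | ⟨j, hjB, hj⟩ | ⟨hC, _⟩
      · exact absurd h (m_ne_v i)
      · have hiB : i ∈ Bset n F := by rw [m_eq_m.mp hj]; exact hjB
        exact Or.inr (Or.inr ⟨⟨i, mem_inter.mpr ⟨hiA, hiB⟩⟩, Or.inl rfl⟩)
      · exact Or.inr (Or.inr ⟨hC, Or.inl rfl⟩)
    · subst hy'; exact Or.inl rfl
    · subst hy'; exact Or.inr (Or.inl ⟨i, hiB, rfl⟩)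
  exact reach_closed hclosed (Or.inl rfl) h

lemma adj_um {F : Finset (Sym2 (Vtx n))} {i : Fin n} (h : s(u n, m n i) ∈ F) :
    (Gr n F).Adj (u n) (m n i) := by
  rw [Gr, SimpleGraph.fromEdgeSet_adj]
  exact ⟨Finset.mem_coe.mpr h, u_ne_m i⟩

lemma adj_mv {F : Finset (Sym2 (Vtx n))} {i : Fin n} (h : s(m n i, v n) ∈ F) :
    (Gr n F).Adj (m n i) (v n) := by
  rw [Gr, SimpleGraph.fromEdgeSet_adj]
  exact ⟨Finset.mem_coe.mpr h, m_ne_v i⟩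

lemma reach_uv_iff {F : Finset (Sym2 (Vtx n))} (hF : F ⊆ edges n) :
    (Gr n F).Reachable (u n) (v n) ↔ (Aset n F ∩ Bset n F).Nonempty := by
  constructor
  · intro h
    rcases reach_from_u hF h with h | ⟨i, _, hi⟩ | ⟨hC, _⟩
    · exact absurd h v_ne_u
    · exact absurd hi (v_ne_m i)
    · exact hC
  · rintro ⟨i, hi⟩
    obtain ⟨hiA, hiB⟩ := mem_inter.mp hi
    exact ((adj_um (mem_Aset.mp hiA)).reachable).trans
      ((adj_mv (mem_Bset.mp hiB)).reachable)

lemma Gdel {F : Finset (Sym2 (Vtx n))} (e : Sym2 (Vtx n)) :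
    Gr n F \ SimpleGraph.fromEdgeSet {e} = Gr n (F.erase e) := by
  ext a b
  simp only [SimpleGraph.sdiff_adj, Gr, SimpleGraph.fromEdgeSet_adj,
    Set.mem_singleton_iff, Finset.coe_erase, Set.mem_diff, Finset.mem_coe]
  tauto

lemma Aset_erase_u {F : Finset (Sym2 (Vtx n))} (i : Fin n) :
    Aset n (F.erase s(u n, m n i)) = (Aset n F).erase i := by
  have key : ∀ j : Fin n, s(u n, m n j) = s(u n, m n i) ↔ j = i := by
    intro j
    rw [Sym2.eq_iff]
    constructor
    · rintro (⟨-, h2⟩ | ⟨h1, -⟩)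
      · exact m_eq_m.mp h2
      · exact absurd h1 (u_ne_m i)
    · rintro rfl; exact Or.inl ⟨rfl, rfl⟩
  ext j
  simp only [mem_Aset, Finset.mem_erase, ne_eq, key]

lemma Bset_erase_u {F : Finset (Sym2 (Vtx n))} (i : Fin n) :
    Bset n (F.erase s(u n, m n i)) = Bset n F := by
  have key : ∀ j : Fin n, ¬ (s(m n j, v n) = s(u n, m n i)) := by
    intro j
    rw [Sym2.eq_iff]
    rintro (⟨h1, -⟩ | ⟨-, h2⟩)
    · exact m_ne_u j h1
    · exact v_ne_u h2
  ext j
  simp only [mem_Bset, Finset.mem_erase, ne_eq, key]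
  tauto
lemma Bset_erase_v {F : Finset (Sym2 (Vtx n))} (i : Fin n) :
    Bset n (F.erase s(m n i, v n)) = (Bset n F).erase i := by
  have key : ∀ j : Fin n, s(m n j, v n) = s(m n i, v n) ↔ j = i := by
    intro j
    rw [Sym2.eq_iff]
    constructor
    · rintro (⟨h1, -⟩ | ⟨h1, -⟩)
      · exact m_eq_m.mp h1
      · exact absurd h1 (m_ne_v j)
    · rintro rfl; exact Or.inl ⟨rfl, rfl⟩
  ext j
  simp only [mem_Bset, Finset.mem_erase, ne_eq, key]

lemma Aset_erase_v {F : Finset (Sym2 (Vtx n))} (i : Fin n) :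
    Aset n (F.erase s(m n i, v n)) = Aset n F := by
  have key : ∀ j : Fin n, ¬ (s(u n, m n j) = s(m n i, v n)) := by
    intro j
    rw [Sym2.eq_iff]
    rintro (⟨h1, -⟩ | ⟨h1, -⟩)
    · exact u_ne_m i h1
    · exact u_ne_v h1
  ext j
  simp only [mem_Aset, Finset.mem_erase, ne_eq, key]
  tauto
lemma bridge_u {F : Finset (Sym2 (Vtx n))} (hF : F ⊆ edges n)
    (hcard : (Aset n F ∩ Bset n F).card ≤ 1) {i : Fin n} (hiA : i ∈ Aset n F) :
    (Gr n F).IsBridge s(u n, m n i) := by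
  rw [SimpleGraph.isBridge_iff]
  rw [SimpleGraph.deleteEdges]
  rw [Gdel]
  intro hreach
  have hF' : F.erase s(u n, m n i) ⊆ edges n := (Finset.erase_subset _ _).trans hF
  rcases reach_from_u hF' hreach with h | ⟨j, hjA, hj⟩ | ⟨hC, h | ⟨j, hjB, hj⟩⟩
  · exact m_ne_u i h
  · rw [Aset_erase_u] at hjA
    obtain ⟨hne, -⟩ := Finset.mem_erase.mp hjA
    exact hne (m_eq_m.mp hj).symm
  · exact m_ne_v i h
  · rw [Bset_erase_u] at hjB
    have hiB : i ∈ Bset n F := (m_eq_m.mp hj) ▸ hjB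
    obtain ⟨k, hk⟩ := hC
    rw [Aset_erase_u, Bset_erase_u] at hk
    obtain ⟨hkA, hkB⟩ := mem_inter.mp hk
    obtain ⟨hki, hkA⟩ := Finset.mem_erase.mp hkA
    have : 1 < (Aset n F ∩ Bset n F).card :=
      Finset.one_lt_card.mpr ⟨i, mem_inter.mpr ⟨hiA, hiB⟩, k,
        mem_inter.mpr ⟨hkA, hkB⟩, fun h => hki h.symm⟩
    omega

lemma bridge_v {F : Finset (Sym2 (Vtx n))} (hF : F ⊆ edges n)
    (hcard : (Aset n F ∩ Bset n F).card ≤ 1) {i : Fin n} (hiB : i ∈ Bset n F) :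
    (Gr n F).IsBridge s(m n i, v n) := by
  rw [SimpleGraph.isBridge_iff]
  rw [SimpleGraph.deleteEdges]
  rw [Gdel]
  intro hreach
  have hF' : F.erase s(m n i, v n) ⊆ edges n := (Finset.erase_subset _ _).trans hF
  rcases reach_from_v hF' hreach.symm with h | ⟨j, hjB, hj⟩ | ⟨hC, h | ⟨j, hjA, hj⟩⟩
  · exact m_ne_v i h
  · rw [Bset_erase_v] at hjB
    obtain ⟨hne, -⟩ := Finset.mem_erase.mp hjB
    exact hne (m_eq_m.mp hj).symm
  · exact m_ne_u i h
  · rw [Aset_erase_v] at hjA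
    have hiA : i ∈ Aset n F := (m_eq_m.mp hj) ▸ hjA
    obtain ⟨k, hk⟩ := hC
    rw [Aset_erase_v, Bset_erase_v] at hk
    obtain ⟨hkA, hkB⟩ := mem_inter.mp hk
    obtain ⟨hki, hkB⟩ := Finset.mem_erase.mp hkB
    have : 1 < (Aset n F ∩ Bset n F).card :=
      Finset.one_lt_card.mpr ⟨i, mem_inter.mpr ⟨hiA, hiB⟩, k,
        mem_inter.mpr ⟨hkA, hkB⟩, fun h => hki h.symm⟩
    omega

lemma acyclic_iff {F : Finset (Sym2 (Vtx n))} (hF : F ⊆ edges n) :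
    (Gr n F).IsAcyclic ↔ (Aset n F ∩ Bset n F).card ≤ 1 := by
  constructor
  · intro hac
    by_contra hcard
    obtain ⟨i, hi, j, hj, hij⟩ := Finset.one_lt_card.mp (lt_of_not_ge hcard)
    obtain ⟨hiA, hiB⟩ := mem_inter.mp hi
    obtain ⟨hjA, hjB⟩ := mem_inter.mp hj
    have h1 := adj_um (mem_Aset.mp hiA)
    have h2 := adj_mv (mem_Bset.mp hiB)
    have h3 := (adj_mv (mem_Bset.mp hjB)).symm
    have h4 := (adj_um (mem_Aset.mp hjA)).symm
    let w : (Gr n F).Walk (u n) (u n) :=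
      .cons h1 (.cons h2 (.cons h3 (.cons h4 .nil)))
    refine hac w ?_
    constructor
    · constructor
      · rw [SimpleGraph.Walk.isTrail_def]
        simp [w, Sym2.eq_iff, hij, Ne.symm hij]
      · simp [w]
    · simp [w, hij, Ne.symm hij]
  · intro hcard
    rw [SimpleGraph.isAcyclic_iff_forall_adj_isBridge]
    intro x y hadj
    rcases adj_cases hF hadj with ⟨i, hiA, ⟨hx, hy⟩ | ⟨hx, hy⟩⟩ |
      ⟨i, hiB, ⟨hx, hy⟩ | ⟨hx, hy⟩⟩
    · subst hx; subst hy; exact bridge_u hF hcard hiA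
    · subst hx; subst hy; rw [Sym2.eq_swap]; exact bridge_u hF hcard hiA
    · subst hx; subst hy; exact bridge_v hF hcard hiB
    · subst hx; subst hy; rw [Sym2.eq_swap]; exact bridge_v hF hcard hiB


def encode (n : ℕ) (p : Finset (Fin n) × Finset (Fin n)) : Finset (Sym2 (Vtx n)) :=
  (p.1.image fun i => s(u n, m n i)) ∪ (p.2.image fun i => s(m n i, v n))

lemma encode_subset (p : Finset (Fin n) × Finset (Fin n)) : encode n p ⊆ edges n := by
  intro e he
  rw [encode, Finset.mem_union] at he
  rcases he with he | he <;> obtain ⟨i, -, rfl⟩ := Finset.mem_image.mp he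
  · exact mem_edges.mpr (Or.inl ⟨i, rfl⟩)
  · exact mem_edges.mpr (Or.inr ⟨i, rfl⟩)

lemma Aset_encode (p : Finset (Fin n) × Finset (Fin n)) : Aset n (encode n p) = p.1 := by
  ext j
  simp only [mem_Aset, encode, Finset.mem_union, Finset.mem_image]
  constructor
  · rintro (⟨i, hi, heq⟩ | ⟨i, hi, heq⟩) <;> rw [Sym2.eq_iff] at heq
    · rcases heq with ⟨-, h2⟩ | ⟨h1, -⟩
      · rwa [← m_eq_m.mp h2]
      · exact absurd h1 (u_ne_m j)
    · rcases heq with ⟨h1, -⟩ | ⟨-, h2⟩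
      · exact absurd h1 (m_ne_u i)
      · exact absurd h2 v_ne_u
  · intro hj; exact Or.inl ⟨j, hj, rfl⟩

lemma Bset_encode (p : Finset (Fin n) × Finset (Fin n)) : Bset n (encode n p) = p.2 := by
  ext j
  simp only [mem_Bset, encode, Finset.mem_union, Finset.mem_image]
  constructor
  · rintro (⟨i, hi, heq⟩ | ⟨i, hi, heq⟩) <;> rw [Sym2.eq_iff] at heq
    · rcases heq with ⟨h1, -⟩ | ⟨h1, -⟩
      · exact absurd h1 (u_ne_m j)
      · exact absurd h1 u_ne_v
    · rcases heq with ⟨h1, -⟩ | ⟨h1, -⟩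
      · rwa [← m_eq_m.mp h1]
      · exact absurd h1 (m_ne_v i)
  · intro hj; exact Or.inr ⟨j, hj, rfl⟩

lemma encode_Aset {F : Finset (Sym2 (Vtx n))} (hF : F ⊆ edges n) :
    encode n (Aset n F, Bset n F) = F := by
  ext e
  simp only [encode, Finset.mem_union, Finset.mem_image, mem_Aset, mem_Bset]
  constructor
  · rintro (⟨i, hi, rfl⟩ | ⟨i, hi, rfl⟩) <;> exact hi
  · intro he
    rcases mem_edges.mp (hF he) with ⟨i, hi⟩ | ⟨i, hi⟩
    · exact Or.inl ⟨i, hi ▸ he, hi⟩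
    · exact Or.inr ⟨i, hi ▸ he, hi⟩


open Classical in
lemma count_transfer (P : Set (Sym2 (Vtx n)) → Prop) [DecidablePred P] :
    (((do
      let a ← (edges n).powerset
      pure (↑a : Set (Sym2 (Vtx n)))) : Finset (Set (Sym2 (Vtx n)))).filter P).card
    = ((edges n).powerset.filter (fun F : Finset (Sym2 (Vtx n)) => P ↑F)).card := by
  classical
  show ((((edges n).powerset).sup
    (fun a => ({(↑a : Set (Sym2 (Vtx n)))} : Finset (Set (Sym2 (Vtx n)))))).filter P).card = _
  rw [Finset.sup_singleton_apply]
  rw [Finset.filter_image]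
  rw [Finset.card_image_of_injective _ Finset.coe_injective]

lemma disconn_eq :
    disconnCount n = (((univ : Finset (Fin n)).powerset ×ˢ
      (univ : Finset (Fin n)).powerset).filter fun p => p.1 ∩ p.2 = ∅).card := by
  classical
  rw [disconnCount]
  refine (count_transfer (fun F => (SimpleGraph.fromEdgeSet F).IsAcyclic ∧
    ¬(SimpleGraph.fromEdgeSet F).Reachable (u n) (v n))).trans ?_
  apply Finset.card_nbij' (fun F => (Aset n F, Bset n F)) (encode n)
  · intro F hFm
    simp only [Finset.mem_coe, Finset.mem_filter, Finset.mem_powerset] at hFm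
    obtain ⟨hsub, hac, hreach⟩ := hFm
    rw [Finset.mem_coe, Finset.mem_filter]
    refine ⟨by simp, ?_⟩
    have h2 : ¬ (Aset n F ∩ Bset n F).Nonempty :=
      fun h => hreach ((reach_uv_iff hsub).mpr h)
    simpa [Finset.not_nonempty_iff_eq_empty] using h2
  · intro p hp
    rw [Finset.mem_coe, Finset.mem_filter] at hp
    simp only [Finset.mem_coe, Finset.mem_filter, Finset.mem_powerset]
    refine ⟨encode_subset _, ?_, ?_⟩
    · refine (acyclic_iff (encode_subset p)).mpr ?_
      rw [Aset_encode, Bset_encode, hp.2]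
      simp
    · intro hreach
      have := (reach_uv_iff (encode_subset p)).mp hreach
      rw [Aset_encode, Bset_encode, hp.2] at this
      simp at this
  · intro F hFm
    simp only [Finset.mem_coe, Finset.mem_filter, Finset.mem_powerset] at hFm
    exact encode_Aset hFm.1
  · intro p hp
    exact Prod.ext (Aset_encode p) (Bset_encode p)

lemma conn_eq :
    connCount n = (((univ : Finset (Fin n)).powerset ×ˢ
      (univ : Finset (Fin n)).powerset).filter fun p => (p.1 ∩ p.2).card = 1).card := by
  classical
  rw [connCount]
  refine (count_transfer (fun F => (SimpleGraph.fromEdgeSet F).IsAcyclic ∧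
    (SimpleGraph.fromEdgeSet F).Reachable (u n) (v n))).trans ?_
  apply Finset.card_nbij' (fun F => (Aset n F, Bset n F)) (encode n)
  · intro F hFm
    simp only [Finset.mem_coe, Finset.mem_filter, Finset.mem_powerset] at hFm
    obtain ⟨hsub, hac, hreach⟩ := hFm
    rw [Finset.mem_coe, Finset.mem_filter]
    refine ⟨by simp, ?_⟩
    have h1 := (acyclic_iff hsub).mp hac
    have h2 : (Aset n F ∩ Bset n F).Nonempty := (reach_uv_iff hsub).mp hreach
    have h3 := Finset.Nonempty.card_pos h2
    exact le_antisymm h1 h3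
  · intro p hp
    rw [Finset.mem_coe, Finset.mem_filter] at hp
    simp only [Finset.mem_coe, Finset.mem_filter, Finset.mem_powerset]
    refine ⟨encode_subset _, ?_, ?_⟩
    · refine (acyclic_iff (encode_subset p)).mpr ?_
      rw [Aset_encode, Bset_encode]
      exact le_of_eq hp.2
    · refine (reach_uv_iff (encode_subset p)).mpr ?_
      rw [Aset_encode, Bset_encode]
      exact Finset.card_pos.mp (by rw [hp.2]; norm_num)
  · intro F hFm
    simp only [Finset.mem_coe, Finset.mem_filter, Finset.mem_powerset] at hFm
    exact encode_Aset hFm.1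
  · intro p hp
    exact Prod.ext (Aset_encode p) (Bset_encode p)



lemma countD {α : Type*} [DecidableEq α] (s : Finset α) :
    ((s.powerset ×ˢ s.powerset).filter fun p => p.1 ∩ p.2 = ∅).card = 3 ^ s.card := by
  classical
  rw [Finset.card_filter, Finset.sum_product]
  have step : ∀ A ∈ s.powerset,
      (∑ B ∈ s.powerset, if A ∩ B = ∅ then 1 else 0) = 2 ^ (s.card - A.card) := by
    intro A hA
    rw [Finset.mem_powerset] at hA
    rw [← Finset.card_filter]
    have hfil : s.powerset.filter (fun B => A ∩ B = ∅) = (s \ A).powerset := by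
      ext B
      simp only [Finset.mem_filter, Finset.mem_powerset, Finset.subset_sdiff]
      rw [← Finset.disjoint_iff_inter_eq_empty, disjoint_comm]
    rw [hfil, Finset.card_powerset, Finset.card_sdiff_of_subset hA]
  rw [Finset.sum_congr rfl step, Finset.sum_powerset]
  have step2 : ∀ j ∈ Finset.range (s.card + 1),
      (∑ A ∈ Finset.powersetCard j s, 2 ^ (s.card - A.card))
        = s.card.choose j * 2 ^ (s.card - j) := by
    intro j hj
    rw [Finset.sum_congr rfl
      (fun A hA => by rw [(Finset.mem_powersetCard.mp hA).2]),
      Finset.sum_const, Finset.card_powersetCard, smul_eq_mul]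
  rw [Finset.sum_congr rfl step2]
  rw [show (3:ℕ) = 1 + 2 from rfl, add_pow]
  exact Finset.sum_congr rfl fun j _ => by push_cast; ring

lemma countC :
    (((univ : Finset (Fin n)).powerset ×ˢ (univ : Finset (Fin n)).powerset).filter
      fun p => (p.1 ∩ p.2).card = 1).card = n * 3 ^ (n - 1) := by
  classical
  have hsplit : (((univ : Finset (Fin n)).powerset ×ˢ univ.powerset).filter
        fun p => (p.1 ∩ p.2).card = 1)
      = (univ : Finset (Fin n)).biUnion fun i =>
        ((univ : Finset (Fin n)).powerset ×ˢ univ.powerset).filter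
          fun p => p.1 ∩ p.2 = {i} := by
    ext p
    simp only [Finset.mem_filter, Finset.mem_biUnion, Finset.mem_univ, true_and,
      Finset.card_eq_one]
    tauto
  rw [hsplit, Finset.card_biUnion]
  · have hfib : ∀ i : Fin n,
        (((univ : Finset (Fin n)).powerset ×ˢ univ.powerset).filter
          fun p => p.1 ∩ p.2 = {i}).card = 3 ^ (n - 1) := by
      intro i
      have hD := countD ((univ : Finset (Fin n)).erase i)
      rw [Finset.card_erase_of_mem (Finset.mem_univ i), Finset.card_univ,
        Fintype.card_fin] at hD
      rw [← hD]
      apply Finset.card_nbij' (fun p => (p.1.erase i, p.2.erase i))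
        (fun q => (insert i q.1, insert i q.2))
      · intro p hp
        rw [Finset.mem_coe, Finset.mem_filter] at hp
        obtain ⟨-, hinter⟩ := hp
        rw [Finset.mem_coe, Finset.mem_filter, Finset.mem_product, Finset.mem_powerset,
          Finset.mem_powerset]
        refine ⟨⟨?_, ?_⟩, ?_⟩
        · intro x hx
          exact Finset.mem_erase.mpr ⟨(Finset.mem_erase.mp hx).1, Finset.mem_univ x⟩
        · intro x hx
          exact Finset.mem_erase.mpr ⟨(Finset.mem_erase.mp hx).1, Finset.mem_univ x⟩
        · ext x
          simp only [Finset.mem_inter, Finset.mem_erase, Finset.notMem_empty,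
            iff_false]
          rintro ⟨⟨hxi, hx1⟩, ⟨-, hx2⟩⟩
          have : x ∈ p.1 ∩ p.2 := Finset.mem_inter.mpr ⟨hx1, hx2⟩
          rw [hinter, Finset.mem_singleton] at this
          exact hxi this
      · intro q hq
        rw [Finset.mem_coe, Finset.mem_filter, Finset.mem_product, Finset.mem_powerset,
          Finset.mem_powerset] at hq
        obtain ⟨⟨hq1, hq2⟩, hqd⟩ := hq
        rw [Finset.mem_coe, Finset.mem_filter]
        refine ⟨by simp, ?_⟩
        ext x
        simp only [Finset.mem_inter, Finset.mem_insert, Finset.mem_singleton]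
        constructor
        · rintro ⟨hx1 | hx1, hx2 | hx2⟩
          · exact hx1
          · exact hx1
          · exact hx2
          · exfalso
            have : x ∈ q.1 ∩ q.2 := Finset.mem_inter.mpr ⟨hx1, hx2⟩
            rw [hqd] at this
            exact Finset.notMem_empty x this
        · rintro rfl
          exact ⟨Or.inl rfl, Or.inl rfl⟩
      · intro p hp
        rw [Finset.mem_coe, Finset.mem_filter] at hp
        have hi1 : i ∈ p.1 ∧ i ∈ p.2 := by
          have : i ∈ p.1 ∩ p.2 := by rw [hp.2]; exact Finset.mem_singleton_self i
          exact Finset.mem_inter.mp this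
        exact Prod.ext (Finset.insert_erase hi1.1) (Finset.insert_erase hi1.2)
      · intro q hq
        rw [Finset.mem_coe, Finset.mem_filter, Finset.mem_product, Finset.mem_powerset,
          Finset.mem_powerset] at hq
        obtain ⟨⟨hq1, hq2⟩, -⟩ := hq
        have h1 : i ∉ q.1 := fun h => (Finset.mem_erase.mp (hq1 h)).1 rfl
        have h2 : i ∉ q.2 := fun h => (Finset.mem_erase.mp (hq2 h)).1 rfl
        exact Prod.ext (Finset.erase_insert h1) (Finset.erase_insert h2)
    rw [Finset.sum_congr rfl (fun i _ => hfib i), Finset.sum_const,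
      Finset.card_univ, Fintype.card_fin, smul_eq_mul]
  · intro a _ b _ hab
    simp only [Finset.disjoint_left, Finset.mem_filter]
    rintro p ⟨-, hpa⟩ ⟨-, hpb⟩
    exact hab (Finset.singleton_injective (hpa ▸ hpb : ({a} : Finset (Fin n)) = {b}))

lemma disconn_val : disconnCount n = 3 ^ n := by
  rw [disconn_eq, countD, Finset.card_univ, Fintype.card_fin]

lemma conn_val : connCount n = n * 3 ^ (n - 1) := by
  rw [conn_eq, countC]

open Classical in
lemma forest_split : forestCount n = disconnCount n + connCount n := by
  classical
  rw [forestCount, disconnCount, connCount]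
  rw [← Finset.filter_filter, ← Finset.filter_filter, add_comm]
  exact (Finset.card_filter_add_card_filter_not _).symm

lemma forest_val : forestCount n = 3 ^ n + n * 3 ^ (n - 1) := by
  rw [forest_split, disconn_val, conn_val]

lemma ratio_val (N : ℕ) :
    (disconnCount N : ℝ) / (forestCount N : ℝ) = 3 / ((N : ℝ) + 3) := by
  rw [disconn_val, forest_val]
  rcases N with _ | k
  · norm_num
  · have h1 : (k + 1) - 1 = k := rfl
    rw [h1, pow_succ]
    push_cast
    have h3 : ((3:ℝ) ^ k) ≠ 0 := by positivity
    field_simp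
    ring

end Stmt19

open Stmt19 in
theorem stmt_19 (n : ℕ) (hn : 1 ≤ n) :
    disconnCount n = 3 ^ n ∧
    connCount n = n * 3 ^ (n - 1) ∧
    -- under the uniform distribution on forests, P[u, v in different components] = 3/(n+3)
    (disconnCount n : ℝ) / (forestCount n : ℝ) = 3 / ((n : ℝ) + 3) ∧
    -- and this probability tends to 0 as n → ∞
    Filter.Tendsto (fun N : ℕ => (disconnCount N : ℝ) / (forestCount N : ℝ))
      Filter.atTop (nhds 0) := by
  refine ⟨disconn_val, conn_val, ratio_val n, ?_⟩
  have h2 : Filter.Tendsto (fun N : ℕ => 3 / ((N : ℝ) + 3)) Filter.atTop (nhds 0) :=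
    Filter.Tendsto.div_atTop tendsto_const_nhds
      (Filter.tendsto_atTop_add_const_right _ 3 tendsto_natCast_atTop_atTop)
  exact h2.congr fun N => (ratio_val N).symm
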